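/- arXiv:2207.02189 — 3 statements merged into one kernel-verified Lean document; each statement's English description precedes it below -/
import Mathlib

section
/- For all real x ≥ 0, |cos((π/2)·√x)| ≤ |1 - x|. -/
open Real

theorem stmt0 (x : ℝ) (hx : 0 ≤ x) :
    |Real.cos (π / 2 * Real.sqrt x)| ≤ |1 - x| := by
  set t := Real.sqrt x with htdef
  have ht : 0 ≤ t := Real.sqrt_nonneg x
  have htx : t ^ 2 = x := Real.sq_sqrt hx
  rw [← htx]
  have hpi1 : (3.14 : ℝ) < π := Real.pi_gt_d2
  have hpi2 : π < 3.15 := Real.pi_lt_d2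
  rcases le_or_gt t (3/5) with hcase | hcase
  · -- small t : use Taylor bound
    have hθ : |π / 2 * t| ≤ 1 := by
      rw [abs_of_nonneg (by positivity)]
      nlinarith
    have hb := Real.cos_bound hθ
    have hcosle : Real.cos (π / 2 * t) ≤ 1 - (π/2*t)^2/2 + |π/2*t|^4 * (5/96) := by
      have := abs_le.1 hb
      linarith [this.2]
    have habs : |π/2*t| = π/2*t := abs_of_nonneg (by positivity)
    rw [habs] at hcosle
    have hcosnn : 0 ≤ Real.cos (π / 2 * t) := by
      apply Real.cos_nonneg_of_mem_Icc
      constructor <;> nlinarith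
    have h1t : 0 ≤ 1 - t^2 := by nlinarith
    rw [abs_of_nonneg hcosnn, abs_of_nonneg h1t]
    have hπ2 : (9.85:ℝ) < π^2 := by nlinarith
    have hπ2u : π^2 < 9.93 := by nlinarith
    have hπ4 : π^4 < 99 := by
      nlinarith [mul_lt_mul_of_pos_left hπ2u (show (0:ℝ) < π^2 by positivity), hπ2u]
    have ht2 : t^2 ≤ 9/25 := by nlinarith
    have h4 : t^4 ≤ (9/25)*t^2 := by
      have := mul_le_mul_of_nonneg_right ht2 (sq_nonneg t)
      nlinarith
    have h0 : (0:ℝ) ≤ t^4 := by positivity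
    have a1 : π^4 * t^4 ≤ 99 * t^4 := mul_le_mul_of_nonneg_right hπ4.le h0
    have hkey : π^4 * t^4 ≤ 99 * ((9/25)*t^2) := by linarith
    have hπ2t : 9.85 * t^2 ≤ π^2 * t^2 := mul_le_mul_of_nonneg_right hπ2.le (sq_nonneg t)
    have e1 : (π/2*t)^2/2 = π^2*t^2/8 := by ring
    have e2 : (π/2*t)^4*(5/96) = π^4*t^4*(5/1536) := by ring
    rw [e1, e2] at hcosle
    linarith
  · -- large t : linear sin bound
    have hkey : Real.cos (π / 2 * t) = Real.sin (π/2 - π/2*t) := by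
      rw [Real.sin_pi_div_two_sub]
    rw [hkey]
    calc |Real.sin (π/2 - π/2*t)| ≤ |π/2 - π/2*t| := Real.abs_sin_le_abs
      _ = π/2 * |1 - t| := by
          rw [show π/2 - π/2*t = π/2*(1-t) by ring, abs_mul,
            abs_of_nonneg (by positivity : (0:ℝ) ≤ π/2)]
      _ ≤ (1 + t) * |1 - t| := by
          apply mul_le_mul_of_nonneg_right _ (abs_nonneg _)
          nlinarith
      _ = |1 - t^2| := by
          rw [show (1:ℝ) - t^2 = (1+t)*(1-t) by ring, abs_mul,
            abs_of_nonneg (by linarith : (0:ℝ) ≤ 1 + t)]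
end

section
/- Let 0 < m < L, K a positive integer, and let σ be any permutation of {1, ..., K}. With r_k = (L+m)/2 - ((L-m)/2)·cos(((k-1/2)π)/K), for every λ ∈ [m, L] we have |∏_{k=1}^K cos((π/2)·√(λ/r_{σ(k)}))| ≤ 2·(1 - 2√m/(√L + √m))^K. -/
open Real

open Finset


lemma lemA (x : ℝ) (hx : 0 ≤ x) : |Real.cos (π/2 * Real.sqrt x)| ≤ |1 - x| := by
  set s := Real.sqrt x with hs
  have hs0 : 0 ≤ s := Real.sqrt_nonneg x
  have hsq : s^2 = x := Real.sq_sqrt hx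
  have hpi1 : (3.141592 : ℝ) < π := Real.pi_gt_d6
  have hpi2 : π < 3.15 := by
    calc π < 3.1416 := Real.pi_lt_d4
    _ < 3.15 := by norm_num
  rcases le_or_gt s (3/5) with hsle | hsgt
  · -- small case
    have hp2 : (9.86 : ℝ) ≤ π^2 := by nlinarith
    have hpp : π^2 ≤ 9.9225 := by nlinarith [Real.pi_pos]
    have hp4 : π^4 ≤ 98.5 := by nlinarith [hpp, sq_nonneg π, Real.pi_pos]
    have h2 : s^2 ≤ 9/25 := by nlinarith
    have ht1 : |π/2 * s| ≤ 1 := by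
      rw [abs_of_nonneg (by positivity)]
      nlinarith
    have hcb := Real.cos_bound ht1
    have hcos_le : Real.cos (π/2 * s) ≤ 1 - (π/2*s)^2/2 + |π/2*s|^4 * (5/96) :=
      by have := (abs_sub_le_iff.1 hcb).1; linarith
    have habs : |π/2*s| = π/2*s := abs_of_nonneg (by positivity)
    rw [habs] at hcos_le
    have h1x : |1 - x| = 1 - x := abs_of_nonneg (by nlinarith)
    have hcosnn : 0 ≤ Real.cos (π/2 * s) := by
      apply Real.cos_nonneg_of_mem_Icc
      constructor
      · nlinarith
      · nlinarith
    rw [h1x, abs_of_nonneg hcosnn]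
    have hkey : (π/2*s)^2/2 - (π/2*s)^4 * (5/96) ≥ s^2 := by nlinarith [sq_nonneg s, mul_le_mul hp4 h2 (by positivity) (by positivity)]
    linarith [hcos_le, hkey, hsq.symm ▸ le_refl x]
  · -- big case
    have key : Real.cos (π/2 * s) = Real.sin (π/2 * (1 - s)) := by
      rw [show π/2 * (1-s) = π/2 - π/2*s by ring, Real.sin_pi_div_two_sub]
    rw [key]
    calc |Real.sin (π/2 * (1-s))| ≤ |π/2 * (1-s)| := Real.abs_sin_le_abs
      _ = π/2 * |1 - s| := by rw [abs_mul, abs_of_nonneg (by positivity)]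
      _ ≤ (1+s) * |1-s| := by
          apply mul_le_mul_of_nonneg_right _ (abs_nonneg _)
          nlinarith
      _ = |1+s| * |1-s| := by rw [abs_of_nonneg (by linarith : (0:ℝ) ≤ 1+s)]
      _ = |1 - x| := by rw [← abs_mul]; congr 1; rw [← hsq]; ring


lemma prodC (K : ℕ) (hK : 0 < K) (z : ℂ) :
    ∏ k ∈ Finset.range K,
      (z^2 - 2*z*((Real.cos ((2*(k:ℝ)+1) * π / (2*(K:ℝ))) : ℝ) : ℂ) + 1)
      = z^(2*K) + 1 := by
  have h2K : (2*(K:ℂ)) ≠ 0 := by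
    simp [Nat.cast_ne_zero]
    exact_mod_cast Nat.pos_iff_ne_zero.1 hK
  set N := 2*K with hN
  have hNpos : 0 < N := by omega
  have hω : IsPrimitiveRoot (Complex.exp (2 * π * Complex.I / N)) N :=
    Complex.isPrimitiveRoot_exp N (by omega)
  set ω := Complex.exp (2 * π * Complex.I / N) with hωdef
  set ζ := Complex.exp (π * Complex.I / N) with hζdef
  have hNC : ((N:ℂ)) = 2*(K:ℂ) := by push_cast [hN]; ring
  have hζN : ζ ^ N = -1 := by
    rw [hζdef, ← Complex.exp_nat_mul]
    have : (N:ℂ) * (π * Complex.I / N) = π * Complex.I := by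
      rw [hNC]; have hK0 : (K:ℂ) ≠ 0 := Nat.cast_ne_zero.mpr hK.ne'; field_simp
    rw [this, Complex.exp_pi_mul_I]
  have hfact := X_pow_sub_C_eq_prod hω hNpos hζN
  have hev := congrArg (Polynomial.eval z) hfact
  simp only [Polynomial.eval_sub, Polynomial.eval_pow, Polynomial.eval_X,
    Polynomial.eval_C, Polynomial.eval_prod, Polynomial.eval_mul] at hev
  have hexp : ∀ j : ℕ, ω^j * ζ
      = Complex.exp ((((2*(j:ℝ)+1) * π / (2*(K:ℝ))) : ℝ) * Complex.I) := by
    intro j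
    rw [hωdef, hζdef, ← Complex.exp_nat_mul, ← Complex.exp_add]
    congr 1
    rw [hNC]
    push_cast
    field_simp
  have hpair : ∀ k ∈ Finset.range K,
      (z - ω^k * ζ) * (z - ω^(N-1-k) * ζ)
      = z^2 - 2*z*((Real.cos ((2*(k:ℝ)+1) * π / (2*(K:ℝ))) : ℝ) : ℂ) + 1 := by
    intro k hk
    have hkK : k < K := Finset.mem_range.1 hk
    set φ : ℝ := (2*(k:ℝ)+1) * π / (2*(K:ℝ)) with hφ
    have e1 : ω^k * ζ = Complex.exp ((φ:ℂ) * Complex.I) := hexp k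
    have e2 : ω^(N-1-k) * ζ = Complex.exp (-(φ:ℂ) * Complex.I) := by
      rw [hexp (N-1-k)]
      have hcast : ((N-1-k : ℕ) : ℝ) = 2*(K:ℝ) - 1 - (k:ℝ) := by
        have h1 : N-1-k = 2*K - (1+k) := by omega
        rw [h1, Nat.cast_sub (by omega)]
        push_cast; ring
      rw [show ((((2*((N-1-k : ℕ):ℝ)+1) * π / (2*(K:ℝ))) : ℝ) : ℂ) * Complex.I
          = 2*π*Complex.I + (-(φ:ℂ) * Complex.I) by
        rw [hφ]; push_cast [hcast]; have hK0 : (K:ℂ) ≠ 0 := Nat.cast_ne_zero.mpr hK.ne'; field_simp; ring]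
      rw [Complex.exp_add, Complex.exp_two_pi_mul_I, one_mul]
    rw [e1, e2]
    have hmul : Complex.exp ((φ:ℂ) * Complex.I) * Complex.exp (-(φ:ℂ) * Complex.I) = 1 := by
      rw [← Complex.exp_add, show (φ:ℂ)*Complex.I + -(φ:ℂ)*Complex.I = 0 by ring,
        Complex.exp_zero]
    have hsum : Complex.exp ((φ:ℂ) * Complex.I) + Complex.exp (-(φ:ℂ) * Complex.I)
        = 2 * Complex.cos (φ:ℂ) := (Complex.two_cos (φ:ℂ)).symm
    have hcc : ((Real.cos φ : ℝ) : ℂ) = Complex.cos (φ:ℂ) := Complex.ofReal_cos φ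
    rw [hcc]
    linear_combination (-z)*hsum + hmul
  calc ∏ k ∈ Finset.range K, (z^2 - 2*z*((Real.cos ((2*(k:ℝ)+1) * π / (2*(K:ℝ))) : ℝ) : ℂ) + 1)
      = ∏ k ∈ Finset.range K, ((z - ω^k * ζ) * (z - ω^(N-1-k) * ζ)) :=
        (Finset.prod_congr rfl hpair).symm
    _ = (∏ k ∈ Finset.range K, (z - ω^k * ζ)) * ∏ k ∈ Finset.range K, (z - ω^(N-1-k) * ζ) :=
        Finset.prod_mul_distrib
    _ = (∏ k ∈ Finset.range K, (z - ω^k * ζ)) * ∏ k ∈ Finset.range K, (z - ω^(K+k) * ζ) := by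
        congr 1
        rw [← Finset.prod_range_reflect (fun j => z - ω^(K+j) * ζ) K]
        apply Finset.prod_congr rfl
        intro k hk
        have hkK : k < K := Finset.mem_range.1 hk
        have h3 : K + (K - 1 - k) = N - 1 - k := by omega
        simp only [h3]
    _ = ∏ j ∈ Finset.range N, (z - ω^j * ζ) := by
        rw [hN, two_mul, Finset.prod_range_add]
    _ = z^N + 1 := by rw [← hev]; ring

lemma prod_u_eq (K : ℕ) (hK : 0 < K) (u : ℝ) :
    ∏ k ∈ Finset.range K, (u^2 - 2*u*Real.cos ((2*(k:ℝ)+1)*π/(2*(K:ℝ))) + 1)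
      = u^(2*K) + 1 := by
  have h := prodC K hK (u:ℂ)
  rw [← Complex.ofReal_inj]
  push_cast
  convert h using 2
  rw [Complex.ofReal_cos]
  norm_cast
  push_cast
  ring

lemma prod_cos_eq (K : ℕ) (hK : 0 < K) (θ : ℝ) :
    ∏ k ∈ Finset.range K, (Real.cos θ - Real.cos ((2*(k:ℝ)+1)*π/(2*(K:ℝ))))
      = Real.cos ((K:ℝ)*θ) / 2^(K-1) := by
  set z := Complex.exp ((θ:ℂ) * Complex.I) with hzdef
  have hz : z * Complex.exp (-(θ:ℂ)*Complex.I) = 1 := by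
    rw [hzdef, ← Complex.exp_add,
      show (θ:ℂ)*Complex.I + -(θ:ℂ)*Complex.I = 0 by ring, Complex.exp_zero]
  have h2c := Complex.two_cos (θ:ℂ)
  have htc : z^2 + 1 = 2*z*Complex.cos (θ:ℂ) := by
    linear_combination -z*h2c - hz
  have h := prodC K hK z
  push_cast at h
  have hfac : ∀ k ∈ Finset.range K,
      z^2 - 2*z*Complex.cos ((2*(k:ℂ)+1) * (π:ℂ) / (2*(K:ℂ))) + 1
      = (2*z) * (Complex.cos (θ:ℂ) - Complex.cos ((2*(k:ℂ)+1) * (π:ℂ) / (2*(K:ℂ)))) := by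
    intro k _
    linear_combination htc
  rw [Finset.prod_congr rfl hfac, Finset.prod_mul_distrib, Finset.prod_const,
    Finset.card_range] at h
  set w := Complex.exp (((K:ℂ)*(θ:ℂ)) * Complex.I) with hwdef
  have hzK : z^K = w := by
    rw [hzdef, hwdef, ← Complex.exp_nat_mul]
    congr 1
    ring
  have hwinv : w * Complex.exp (-((K:ℂ)*(θ:ℂ))*Complex.I) = 1 := by
    rw [hwdef, ← Complex.exp_add,
      show ((K:ℂ)*(θ:ℂ))*Complex.I + -((K:ℂ)*(θ:ℂ))*Complex.I = 0 by ring,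
      Complex.exp_zero]
  have h2cK := Complex.two_cos ((K:ℂ)*(θ:ℂ))
  have hz2K : z^(2*K) + 1 = 2*w*Complex.cos ((K:ℂ)*(θ:ℂ)) := by
    rw [show 2*K = K*2 by ring, pow_mul, hzK]
    linear_combination -w*h2cK - hwinv
  rw [hz2K, mul_pow, hzK] at h
  -- h : 2^K * w * ∏ ... = 2 * w * cos(Kθ)
  have hwne : w ≠ 0 := Complex.exp_ne_zero _
  have h2K : (2:ℂ)^K = 2 * 2^(K-1) := by
    rw [← pow_succ']
    congr 1
    omega
  have hP : (∏ k ∈ Finset.range K,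
      (Complex.cos (θ:ℂ) - Complex.cos ((2*(k:ℂ)+1) * (π:ℂ) / (2*(K:ℂ)))))
      = Complex.cos ((K:ℂ)*(θ:ℂ)) / 2^(K-1) := by
    have h2ne : ((2:ℂ)^(K-1)) ≠ 0 := pow_ne_zero _ two_ne_zero
    rw [eq_div_iff h2ne]
    apply mul_left_cancel₀ (mul_ne_zero two_ne_zero hwne)
    rw [show (2*w) * (Complex.cos ((K:ℂ)*(θ:ℂ))) = 2*w*Complex.cos ((K:ℂ)*(θ:ℂ)) by ring, ← h, h2K]
    ring
  rw [← Complex.ofReal_inj]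
  push_cast
  exact hP

theorem stmt10 (m L : ℝ) (hm : 0 < m) (hmL : m < L) (K : ℕ) (hK : 0 < K)
    (σ : Equiv.Perm (Fin K))
    (r : Fin K → ℝ)
    (hr : ∀ k : Fin K, r k =
      (L + m) / 2 - (L - m) / 2 * Real.cos ((((k : ℕ) : ℝ) + 1 - 1 / 2) * π / K))
    (lam : ℝ) (hlam : lam ∈ Set.Icc m L) :
    |∏ k : Fin K, Real.cos (π / 2 * Real.sqrt (lam / r (σ k)))| ≤
      2 * (1 - 2 * Real.sqrt m / (Real.sqrt L + Real.sqrt m)) ^ K := by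
  obtain ⟨hlam1, hlam2⟩ := hlam
  have hLm : (0:ℝ) < L - m := by linarith
  have hKR : ((K:ℝ)) ≠ 0 := by positivity
  set sL := Real.sqrt L with hsL
  set sm := Real.sqrt m with hsm
  have hsm0 : 0 < sm := Real.sqrt_pos.2 hm
  have hsL0 : 0 < sL := Real.sqrt_pos.2 (by linarith)
  have hsmL : sm < sL := Real.sqrt_lt_sqrt (le_of_lt hm) hmL
  have hL2 : sL^2 = L := Real.sq_sqrt (by linarith)
  have hm2 : sm^2 = m := Real.sq_sqrt (le_of_lt hm)
  set u : ℝ := (sL+sm)/(sL-sm) with hu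
  have hu0 : 0 < u := by
    apply div_pos <;> linarith
  have hu1 : 1 < u := by
    rw [hu, lt_div_iff₀ (by linarith)]
    linarith
  set x : Fin K → ℝ := fun k => Real.cos ((2*((k:ℕ):ℝ)+1) * π / (2*(K:ℝ))) with hx
  have hrx : ∀ k, r k = (L+m)/2 - (L-m)/2 * x k := by
    intro k
    rw [hr k, hx]
    congr 2
    field_simp
    ring
  have hx1 : ∀ k, -1 ≤ x k := fun k => Real.neg_one_le_cos _
  have hx2 : ∀ k, x k ≤ 1 := fun k => Real.cos_le_one _
  have hrpos : ∀ k, 0 < r k := by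
    intro k
    rw [hrx k]
    nlinarith [hx2 k]
  set t0 : ℝ := (L+m)/(L-m) with ht0
  set t : ℝ := (L+m-2*lam)/(L-m) with ht
  have ht0x : ∀ k, t0 - x k = 2 * r k / (L-m) := by
    intro k
    rw [hrx k, ht0]
    field_simp
  have ht0xpos : ∀ k, 0 < t0 - x k := by
    intro k
    rw [ht0x k]
    exact div_pos (by linarith [hrpos k]) hLm
  -- per-factor bound
  have hfac : ∀ k : Fin K, |Real.cos (π/2 * Real.sqrt (lam / r k))|
      ≤ |t - x k| / (t0 - x k) := by
    intro k
    have h0 : 0 ≤ lam / r k := le_of_lt (div_pos (lt_of_lt_of_le hm hlam1) (hrpos k))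
    have h1 : 1 - lam / r k = (t - x k)/(t0 - x k) := by
      have hxk : x k = (L+m-2*r k)/(L-m) := by
        rw [eq_div_iff hLm.ne']
        linear_combination 2*(hrx k)
      rw [ht0x k, ht, hxk]
      have hrk := (hrpos k).ne'
      field_simp
      ring
    calc |Real.cos (π/2 * Real.sqrt (lam / r k))| ≤ |1 - lam / r k| := lemA _ h0
      _ = |t - x k| / (t0 - x k) := by
          rw [h1, abs_div, abs_of_pos (ht0xpos k)]
  -- the numerator product
  set θ : ℝ := Real.arccos t with hθ
  have htmem : -1 ≤ t ∧ t ≤ 1 := by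
    constructor
    · rw [ht, le_div_iff₀ hLm]; linarith
    · rw [ht, div_le_iff₀ hLm]; linarith
  have htcos : Real.cos θ = t := Real.cos_arccos htmem.1 htmem.2
  have hnum : ∏ k : Fin K, (t - x k) = Real.cos ((K:ℝ)*θ) / 2^(K-1) := by
    have := (Fin.prod_univ_eq_prod_range
      (fun j : ℕ => Real.cos θ - Real.cos ((2*(j:ℝ)+1) * π / (2*(K:ℝ)))) K).trans
      (prod_cos_eq K hK θ)
    rw [← this]
    apply Finset.prod_congr rfl
    intro k _
    rw [htcos, hx]
  -- the denominator product
  have hLm' : L - m = (sL-sm)*(sL+sm) := by linear_combination hm2 - hL2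
  have hu2 : u^2 + 1 = 2*u*t0 := by
    rw [hu, ht0, hLm']
    have h1 : sL - sm ≠ 0 := by linarith
    have h2 : sL + sm ≠ 0 := by linarith
    field_simp
    linear_combination 2*hL2 + 2*hm2
  have hden1 : ∀ k, t0 - x k = (u^2 - 2*u*(x k) + 1)/(2*u) := by
    intro k
    rw [eq_div_iff (by positivity)]
    linarith [hu2]
  have hden : ∏ k : Fin K, (t0 - x k) = (u^(2*K) + 1)/(2*u)^K := by
    have h1 : ∏ k : Fin K, (u^2 - 2*u*(x k) + 1) = u^(2*K) + 1 :=
      (Fin.prod_univ_eq_prod_range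
        (fun j : ℕ => u^2 - 2*u*Real.cos ((2*(j:ℝ)+1) * π / (2*(K:ℝ))) + 1) K).trans
        (prod_u_eq K hK u)
    calc ∏ k : Fin K, (t0 - x k)
        = ∏ k : Fin K, ((u^2 - 2*u*(x k) + 1)/(2*u)) :=
          Finset.prod_congr rfl (fun k _ => hden1 k)
      _ = (∏ k : Fin K, (u^2 - 2*u*(x k) + 1))/(2*u)^K := by
          rw [Finset.prod_div_distrib, Finset.prod_const, Finset.card_univ, Fintype.card_fin]
      _ = (u^(2*K) + 1)/(2*u)^K := by rw [h1]
  have humK : (0:ℝ) < u^(2*K) := by positivity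
  have h2u : (0:ℝ) < (2*u)^K := by positivity
  have hQ : (0:ℝ) < (u^(2*K) + 1)/(2*u)^K := by
    exact div_pos (by linarith) h2u
  have h2pow : (0:ℝ) < 2^(K-1) := by positivity
  have efin : (1/2^(K-1) : ℝ)/(u^(2*K)/(2*u)^K) = 2*(1 - 2*sm/(sL+sm))^K := by
    have h1u : 1 - 2*sm/(sL+sm) = 1/u := by
      rw [hu, one_div_div]
      field_simp
      ring
    have e1 : (2:ℝ)^K = 2*2^(K-1) := by
      rw [← pow_succ']
      congr 1
      omega
    have key : (1/2^(K-1) : ℝ)/(u^(2*K)/(2*u)^K) = 2/u^K := by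
      have e2 : u^(2*K) = u^K * u^K := by rw [two_mul, pow_add]
      have e3 : (2*u)^K = 2^K * u^K := mul_pow 2 u K
      rw [e2, e3, e1]
      have h4 : u^K ≠ 0 := by positivity
      have h5 : ((2:ℝ)^(K-1)) ≠ 0 := ne_of_gt h2pow
      field_simp
    have e4 : (1/u : ℝ)^K = 1/u^K := by rw [one_div, one_div, inv_pow]
    rw [h1u, e4, mul_one_div]
    exact key
  calc |∏ k : Fin K, Real.cos (π / 2 * Real.sqrt (lam / r (σ k)))|
      = ∏ k : Fin K, |Real.cos (π / 2 * Real.sqrt (lam / r (σ k)))| := Finset.abs_prod _ _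
    _ = ∏ k : Fin K, |Real.cos (π / 2 * Real.sqrt (lam / r k))| :=
        Equiv.prod_comp σ (fun k => |Real.cos (π / 2 * Real.sqrt (lam / r k))|)
    _ ≤ ∏ k : Fin K, (|t - x k| / (t0 - x k)) :=
        Finset.prod_le_prod (fun k _ => abs_nonneg _) (fun k _ => hfac k)
    _ = (∏ k : Fin K, |t - x k|) / ∏ k : Fin K, (t0 - x k) := Finset.prod_div_distrib _ _
    _ = |Real.cos ((K:ℝ)*θ)| / 2^(K-1) / ((u^(2*K) + 1)/(2*u)^K) := by
        rw [hden, ← Finset.abs_prod, hnum, abs_div,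
          abs_of_pos h2pow]
    _ ≤ 1 / 2^(K-1) / ((u^(2*K) + 1)/(2*u)^K) := by
        apply (div_le_div_iff_of_pos_right hQ).2
        exact (div_le_div_iff_of_pos_right h2pow).2 (Real.abs_cos_le_one _)
    _ ≤ 1 / 2^(K-1) / (u^(2*K)/(2*u)^K) := by
        apply div_le_div_of_nonneg_left (by positivity) (div_pos humK h2u)
        exact (div_le_div_iff_of_pos_right h2u).2 (by linarith)
    _ = 2 * (1 - 2*sm/(sL+sm))^K := efin
end

section
/- Let 0 < m < L, let λ_1, ..., λ_d ∈ [m, L], let K be a positive integer, let σ be a permutation of {1,...,K}, and set η_k = (π/2)·(1/√(2·r_{σ(k)})) where r_k = (L+m)/2 - ((L-m)/2)·cos(((k-1/2)π)/K). If sequences (x_k), (y_k) in ℝ^d satisfy x_k[j] - y_k[j] = cos(√(2λ_j)·η_k)·(x_{k-1}[j] - y_{k-1}[j]) for all j, k, then ‖x_K - y_K‖ ≤ 2·(1 - 2√m/(√L + √m))^K · ‖x_0 - y_0‖. -/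
open Real

section Aux
open Complex Polynomial Finset
lemma rootsNegOne (n : ℕ) (hn : 0 < n) (z : ℂ) :
    ∏ k ∈ Finset.range n, (z - Complex.exp (((2 * k + 1) * π / n) * Complex.I)) = z ^ n + 1 := by
  have hζ : IsPrimitiveRoot (Complex.exp (2 * π * Complex.I / n)) n :=
    Complex.isPrimitiveRoot_exp n hn.ne'
  have hα : (Complex.exp (π / n * Complex.I)) ^ n = (-1 : ℂ) := by
    rw [← Complex.exp_nat_mul]
    rw [show (n : ℂ) * (π / n * Complex.I) = π * Complex.I by
      have hn' : (n : ℂ) ≠ 0 := Nat.cast_ne_zero.mpr hn.ne'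
      field_simp]
    exact Complex.exp_pi_mul_I
  have h := X_pow_sub_C_eq_prod hζ hn hα
  have h2 := congrArg (Polynomial.eval z) h
  simp only [eval_sub, eval_pow, eval_X, eval_C, eval_prod] at h2
  rw [sub_neg_eq_add] at h2
  rw [h2]
  apply Finset.prod_congr rfl
  intro k hk
  congr 1
  rw [← Complex.exp_nat_mul, ← Complex.exp_add]
  congr 1
  have hn' : (n : ℂ) ≠ 0 := Nat.cast_ne_zero.mpr hn.ne'
  field_simp

lemma chebProd (K : ℕ) (hK : 0 < K) (z : ℂ) (hz : z ≠ 0) :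
    ∏ k ∈ Finset.range K,
      ((z + z⁻¹) / 2 - ((Real.cos ((2 * k + 1) * π / (2 * K)) : ℝ) : ℂ)) =
      (z ^ K + (z⁻¹) ^ K) / 2 ^ K := by
  have hK2 : (0:ℕ) < 2 * K := by omega
  have hK0 : (K : ℂ) ≠ 0 := Nat.cast_ne_zero.mpr hK.ne'
  set a : ℕ → ℂ := fun k => Complex.exp (((2 * k + 1) * π / (2 * K)) * Complex.I) with ha
  have hfac : ∀ k ∈ Finset.range K,
      (z + z⁻¹) / 2 - ((Real.cos ((2 * k + 1) * π / (2 * K)) : ℝ) : ℂ)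
        = (z - a k) * (z - (a k)⁻¹) / (2 * z) := by
    intro k _
    have hcos : ((Real.cos ((2 * k + 1) * π / (2 * K)) : ℝ) : ℂ)
        = (a k + (a k)⁻¹) / 2 := by
      rw [Complex.ofReal_cos]
      rw [show ((((2 * k + 1) * π / (2 * K) : ℝ)) : ℂ) = ((2 * (k:ℂ) + 1) * π / (2 * K)) by
        push_cast; ring]
      rw [show Complex.cos ((2 * (k:ℂ) + 1) * π / (2 * K))
          = (Complex.exp (((2 * (k:ℂ) + 1) * π / (2 * K)) * Complex.I)
            + Complex.exp (-((2 * (k:ℂ) + 1) * π / (2 * K)) * Complex.I)) / 2 from rfl]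
      rw [neg_mul, Complex.exp_neg]
    rw [hcos]
    have := Complex.exp_ne_zero (((2 * k + 1) * π / (2 * K)) * Complex.I)
    rw [ha]
    field_simp
    ring
  rw [Finset.prod_congr rfl hfac, Finset.prod_div_distrib, Finset.prod_const,
    Finset.prod_mul_distrib]
  have hbig := rootsNegOne (2 * K) hK2 z
  have hsplit : ∏ k ∈ Finset.range (2 * K), (z - a k)
      = (∏ k ∈ Finset.range K, (z - a k)) * ∏ k ∈ Finset.range K, (z - (a k)⁻¹) := by
    rw [two_mul, Finset.prod_range_add]
    congr 1
    rw [← Finset.prod_range_reflect (fun j => z - a (K + j)) K]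
    apply Finset.prod_congr rfl
    intro k hk
    simp only [Finset.mem_range] at hk
    congr 1
    rw [ha]
    simp only
    rw [← Complex.exp_neg]
    rw [show ((2 * ((K + (K - 1 - k)) : ℕ) + 1) * (π : ℂ) / (2 * K) * Complex.I)
        = -((2 * k + 1) * π / (2 * K) * Complex.I) + 2 * π * Complex.I by
      have h1 : (((K + (K - 1 - k)) : ℕ) : ℂ) = 2 * K - 1 - k := by
        have : K - 1 - k = K - (1 + k) := by omega
        rw [this]
        push_cast [Nat.cast_sub (by omega : 1 + k ≤ K)]
        ring
      rw [h1]
      field_simp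
      ring]
    rw [Complex.exp_add, Complex.exp_two_pi_mul_I, mul_one]
  push_cast at hbig
  rw [hsplit] at hbig
  rw [Finset.card_range, hbig, mul_pow]
  have hzK : z ^ K ≠ 0 := pow_ne_zero _ hz
  rw [div_eq_div_iff (mul_ne_zero (pow_ne_zero _ two_ne_zero) hzK) (pow_ne_zero _ two_ne_zero)]
  have hone : z⁻¹ ^ K * z ^ K = 1 := by
    rw [← mul_pow, inv_mul_cancel₀ hz, one_pow]
  linear_combination (-(2:ℂ) ^ K) * hone

lemma prodCosReal (K : ℕ) (hK : 0 < K) (φ : ℝ) :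
    ∏ k ∈ Finset.range K, (Real.cos φ - Real.cos ((2 * k + 1) * π / (2 * K)))
      = Real.cos (K * φ) * 2 / 2 ^ K := by
  have h := chebProd K hK (Complex.exp ((φ:ℂ) * Complex.I)) (Complex.exp_ne_zero _)
  have hinv : (Complex.exp ((φ:ℂ) * Complex.I))⁻¹ = Complex.exp (-(φ:ℂ) * Complex.I) := by
    rw [← Complex.exp_neg, neg_mul]
  have hc : ((Real.cos φ : ℝ) : ℂ)
      = (Complex.exp ((φ:ℂ) * Complex.I) + (Complex.exp ((φ:ℂ) * Complex.I))⁻¹) / 2 := by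
    rw [hinv, Complex.ofReal_cos]; rfl
  have hzK : (Complex.exp ((φ:ℂ) * Complex.I)) ^ K
      = Complex.exp (((K * φ : ℝ) : ℂ) * Complex.I) := by
    rw [← Complex.exp_nat_mul]; congr 1; push_cast; ring
  have hzKi : ((Complex.exp ((φ:ℂ) * Complex.I))⁻¹) ^ K
      = Complex.exp (-((K * φ : ℝ) : ℂ) * Complex.I) := by
    rw [hinv, ← Complex.exp_nat_mul]; congr 1; push_cast; ring
  rw [← hc, hzK, hzKi] at h
  have h2 : Complex.exp (((K * φ : ℝ) : ℂ) * Complex.I)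
        + Complex.exp (-((K * φ : ℝ) : ℂ) * Complex.I)
      = ((Real.cos (K * φ) * 2 : ℝ) : ℂ) := by
    push_cast
    rw [show Complex.cos ((K:ℂ) * (φ:ℂ))
        = (Complex.exp (((K:ℂ) * (φ:ℂ)) * Complex.I)
          + Complex.exp (-((K:ℂ) * (φ:ℂ)) * Complex.I)) / 2 from rfl]
    ring
  rw [h2] at h
  apply Complex.ofReal_inj.mp
  push_cast
  push_cast at h
  rw [h]

lemma prodCoshReal (K : ℕ) (hK : 0 < K) (t : ℝ) (ht : t ≠ 0) :
    ∏ k ∈ Finset.range K, ((t + t⁻¹) / 2 - Real.cos ((2 * k + 1) * π / (2 * K)))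
      = (t ^ K + (t⁻¹) ^ K) / 2 ^ K := by
  have h := chebProd K hK (t : ℂ) (by exact_mod_cast ht)
  apply Complex.ofReal_inj.mp
  push_cast
  push_cast at h
  rw [h]

lemma cosBound (x : ℝ) (hx : 0 ≤ x) : |Real.cos (π / 2 * x)| ≤ |1 - x ^ 2| := by
  rcases le_or_gt x 1 with h1 | h1
  · -- 0 ≤ x ≤ 1
    have hmem : π / 2 * x ∈ Set.Icc (-(π/2)) (π/2) := by
      constructor
      · nlinarith [pi_pos]
      · nlinarith [pi_pos]
    have hnn : 0 ≤ Real.cos (π / 2 * x) := Real.cos_nonneg_of_mem_Icc hmem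
    rw [_root_.abs_of_nonneg hnn, _root_.abs_of_nonneg (by nlinarith : (0:ℝ) ≤ 1 - x ^ 2)]
    -- cos(πx/2) = 1 - 2 sin(πx/4)^2 and sin(πx/4) ≥ x * sin(π/4)
    have hsin : x * Real.sin (π / 4) ≤ Real.sin (x * (π / 4)) := by
      have hconc := strictConcaveOn_sin_Icc.concaveOn.2
        (show (0:ℝ) ∈ Set.Icc 0 π from Set.mem_Icc.mpr ⟨le_refl 0, pi_pos.le⟩)
        (show π / 4 ∈ Set.Icc (0:ℝ) π from
          Set.mem_Icc.mpr ⟨by positivity, by linarith [pi_pos]⟩)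
        (by linarith : (0:ℝ) ≤ 1 - x) hx (by ring)
      simpa [smul_eq_mul] using hconc
    have hs4 : Real.sin (π / 4) = Real.sqrt 2 / 2 := Real.sin_pi_div_four
    have hx2 : x * (Real.sqrt 2 / 2) ≤ Real.sin (x * (π / 4)) := by rw [← hs4]; exact hsin
    have hsq : (x * (Real.sqrt 2 / 2)) ^ 2 ≤ Real.sin (x * (π / 4)) ^ 2 := by
      apply sq_le_sq' <;> nlinarith [Real.sqrt_nonneg 2]
    have hsqrt2 : Real.sqrt 2 ^ 2 = 2 := Real.sq_sqrt (by norm_num)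
    have hcos2 : Real.cos (π / 2 * x) = 1 - 2 * Real.sin (x * (π / 4)) ^ 2 := by
      rw [show π / 2 * x = 2 * (x * (π / 4)) by ring, Real.cos_two_mul]
      have := Real.sin_sq_add_cos_sq (x * (π / 4))
      nlinarith
    nlinarith
  · -- x > 1
    rcases le_or_gt 2 (x ^ 2) with h2 | h2
    · calc |Real.cos (π / 2 * x)| ≤ 1 := Real.abs_cos_le_one _
        _ ≤ |1 - x ^ 2| := by rw [abs_of_nonpos (by nlinarith)]; nlinarith
    · -- 1 < x, x^2 < 2
      have hxlt : x < 2 := by nlinarith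
      have hrw : Real.cos (π / 2 * x) = -Real.sin (π / 2 * (x - 1)) := by
        rw [show π / 2 * x = π / 2 + π / 2 * (x - 1) by ring]
        rw [Real.cos_add, Real.cos_pi_div_two, Real.sin_pi_div_two]
        ring
      have ht0 : 0 ≤ π / 2 * (x - 1) := by nlinarith [pi_pos]
      have htpi : π / 2 * (x - 1) ≤ π := by nlinarith [pi_pos]
      have hsnn : 0 ≤ Real.sin (π / 2 * (x - 1)) :=
        Real.sin_nonneg_of_nonneg_of_le_pi ht0 htpi
      rw [hrw, abs_neg, _root_.abs_of_nonneg hsnn,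
        abs_of_nonpos (by nlinarith), neg_sub]
      calc Real.sin (π / 2 * (x - 1)) ≤ π / 2 * (x - 1) := Real.sin_le ht0
        _ ≤ x ^ 2 - 1 := by nlinarith [pi_lt_d2]

lemma coordBound (m L : ℝ) (hm : 0 < m) (hmL : m < L) (K : ℕ) (hK : 0 < K)
    (lamj : ℝ) (hlam : lamj ∈ Set.Icc m L) :
    ∏ k ∈ Finset.range K,
      |1 - lamj / ((L + m) / 2 - (L - m) / 2 * Real.cos ((2 * k + 1) * π / (2 * K)))|
      ≤ 2 * ((Real.sqrt L - Real.sqrt m) / (Real.sqrt L + Real.sqrt m)) ^ K := by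
  set B : ℝ := (L - m) / 2 with hB
  set A : ℝ := (L + m) / 2 with hA
  have hB0 : 0 < B := by rw [hB]; linarith
  set R : ℕ → ℝ := fun k => A - B * Real.cos ((2 * k + 1) * π / (2 * K)) with hRdef
  have hRpos : ∀ k, 0 < R k := by
    intro k
    have := Real.cos_le_one ((2 * k + 1) * π / (2 * K))
    have : B * Real.cos ((2 * k + 1) * π / (2 * K)) ≤ B * 1 := by
      apply mul_le_mul_of_nonneg_left this hB0.le
    simp only [hRdef, hA]
    nlinarith
  have hRm : ∀ k, m ≤ R k := by
    intro k
    have := Real.cos_le_one ((2 * k + 1) * π / (2 * K))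
    have : B * Real.cos ((2 * k + 1) * π / (2 * K)) ≤ B * 1 := by
      apply mul_le_mul_of_nonneg_left this hB0.le
    simp only [hRdef, hA]
    nlinarith
  -- square roots
  have hsm : 0 < Real.sqrt m := Real.sqrt_pos.mpr hm
  have hsL : 0 < Real.sqrt L := Real.sqrt_pos.mpr (hm.trans hmL)
  have hsmL : Real.sqrt m < Real.sqrt L := Real.sqrt_lt_sqrt hm.le hmL
  have hsm2 : Real.sqrt m ^ 2 = m := Real.sq_sqrt hm.le
  have hsL2 : Real.sqrt L ^ 2 = L := Real.sq_sqrt (hm.trans hmL).le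
  set t : ℝ := (Real.sqrt L + Real.sqrt m) / (Real.sqrt L - Real.sqrt m) with htdef
  have ht1 : 1 < t := by
    rw [htdef, lt_div_iff₀ (by linarith)]
    linarith
  have ht0 : 0 < t := by linarith
  set q : ℝ := (Real.sqrt L - Real.sqrt m) / (Real.sqrt L + Real.sqrt m) with hqdef
  have hq0 : 0 < q := by apply div_pos <;> linarith
  have hqt : q = t⁻¹ := by
    rw [hqdef, htdef, inv_div]
  -- rewrite each factor: |1 - lam/R k| = |R k - lam| / R k
  have hfac : ∀ k ∈ Finset.range K, |1 - lamj / R k| = |R k - lamj| / R k := by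
    intro k _
    rw [show (1 - lamj / R k) = (R k - lamj) / R k by
        rw [sub_div, div_self (hRpos k).ne'], abs_div, _root_.abs_of_pos (hRpos k)]
  rw [Finset.prod_congr rfl hfac, Finset.prod_div_distrib, ← Finset.abs_prod]
  -- numerator: ∏ (R k - lamj) = B^K * cos(K φ) * 2 / 2^K
  have hcos_mem : -1 ≤ (A - lamj) / B ∧ (A - lamj) / B ≤ 1 := by
    obtain ⟨h1, h2⟩ := hlam
    constructor
    · rw [le_div_iff₀ hB0]; simp only [hA, hB]; linarith
    · rw [div_le_iff₀ hB0]; simp only [hA, hB]; linarith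
  set φ : ℝ := Real.arccos ((A - lamj) / B) with hφ
  have hcosφ : Real.cos φ = (A - lamj) / B := Real.cos_arccos hcos_mem.1 hcos_mem.2
  clear_value B A R t q φ
  have hnum : ∏ k ∈ Finset.range K, (R k - lamj)
      = B ^ K * (Real.cos (K * φ) * 2 / 2 ^ K) := by
    have hfe : ∀ k ∈ Finset.range K, R k - lamj
        = B * (Real.cos φ - Real.cos ((2 * k + 1) * π / (2 * K))) := by
      intro k _
      rw [hcosφ]
      simp only [hRdef]
      field_simp
      ring
    rw [Finset.prod_congr rfl hfe, Finset.prod_mul_distrib, Finset.prod_const,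
      Finset.card_range, prodCosReal K hK φ]
  have htsum : t + t⁻¹ = 2 * A / B := by
    rw [htdef, hA, hB, inv_div]
    rw [div_add_div _ _ (by linarith : Real.sqrt L - Real.sqrt m ≠ 0)
      (by linarith : Real.sqrt L + Real.sqrt m ≠ 0)]
    rw [div_eq_div_iff (by nlinarith) (by nlinarith)]
    nlinarith [hsL2, hsm2]
  have hden : ∏ k ∈ Finset.range K, R k = B ^ K * ((t ^ K + (t⁻¹) ^ K) / 2 ^ K) := by
    have hfe : ∀ k ∈ Finset.range K, R k
        = B * ((t + t⁻¹) / 2 - Real.cos ((2 * k + 1) * π / (2 * K))) := by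
      intro k _
      rw [htsum]
      simp only [hRdef]
      field_simp
    rw [Finset.prod_congr rfl hfe, Finset.prod_mul_distrib, Finset.prod_const,
      Finset.card_range, prodCoshReal K hK t ht0.ne']
  have hdenpos : 0 < ∏ k ∈ Finset.range K, R k :=
    Finset.prod_pos (fun k _ => hRpos k)
  have habs : |∏ k ∈ Finset.range K, (R k - lamj)| ≤ B ^ K * 2 / 2 ^ K := by
    rw [hnum, abs_mul, _root_.abs_of_pos (pow_pos hB0 K)]
    have h1 : |Real.cos (K * φ) * 2 / 2 ^ K| ≤ 2 / 2 ^ K := by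
      calc |Real.cos (K * φ) * 2 / 2 ^ K|
          = |Real.cos (K * φ)| * 2 / 2 ^ K := by
            rw [abs_div, abs_mul, _root_.abs_two,
              _root_.abs_of_pos (by positivity : (0:ℝ) < (2:ℝ) ^ K)]
        _ ≤ 1 * 2 / 2 ^ K := by gcongr; exact Real.abs_cos_le_one _
        _ = 2 / 2 ^ K := by ring
    calc B ^ K * |Real.cos (K * φ) * 2 / 2 ^ K| ≤ B ^ K * (2 / 2 ^ K) := by
          exact mul_le_mul_of_nonneg_left h1 (pow_pos hB0 K).le
      _ = B ^ K * 2 / 2 ^ K := by ring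
  have hdenge : B ^ K * t ^ K / 2 ^ K ≤ ∏ k ∈ Finset.range K, R k := by
    rw [hden]
    have h0 : (0:ℝ) ≤ B ^ K * (t⁻¹ ^ K / 2 ^ K) := by positivity
    have he : B ^ K * ((t ^ K + t⁻¹ ^ K) / 2 ^ K)
        = B ^ K * t ^ K / 2 ^ K + B ^ K * (t⁻¹ ^ K / 2 ^ K) := by ring
    linarith
  have hqt1 : q ^ K * t ^ K = 1 := by
    rw [← mul_pow, hqt, inv_mul_cancel₀ ht0.ne', one_pow]
  rw [div_le_iff₀ hdenpos]
  calc |∏ k ∈ Finset.range K, (R k - lamj)| ≤ B ^ K * 2 / 2 ^ K := habs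
    _ = 2 * q ^ K * (B ^ K * t ^ K / 2 ^ K) := by
        rw [show 2 * q ^ K * (B ^ K * t ^ K / 2 ^ K)
            = (q ^ K * t ^ K) * (B ^ K * 2 / 2 ^ K) from by ring, hqt1, one_mul]
    _ ≤ 2 * q ^ K * ∏ k ∈ Finset.range K, R k := by
        apply mul_le_mul_of_nonneg_left hdenge (by positivity)

end Aux

theorem stmt15 (m L : ℝ) (hm : 0 < m) (hmL : m < L)
    (d K : ℕ) (hd : 0 < d) (hK : 0 < K)
    (lam : Fin d → ℝ) (hlam : ∀ j, lam j ∈ Set.Icc m L)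
    (σ : Equiv.Perm (Fin K))
    (r : Fin K → ℝ)
    (hr : ∀ k : Fin K, r k =
      (L + m) / 2 - (L - m) / 2 * Real.cos ((((k : ℕ) : ℝ) + 1 - 1 / 2) * π / K))
    (η : Fin K → ℝ) (hη : ∀ k, η k = π / 2 * (1 / Real.sqrt (2 * r (σ k))))
    (x y : ℕ → EuclideanSpace ℝ (Fin d))
    (hstep : ∀ j : Fin d, ∀ k : Fin K,
      x (k + 1) j - y (k + 1) j =
        Real.cos (Real.sqrt (2 * lam j) * η k) * (x k j - y k j)) :
    ‖x K - y K‖ ≤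
      2 * (1 - 2 * Real.sqrt m / (Real.sqrt L + Real.sqrt m)) ^ K * ‖x 0 - y 0‖ := by
  have hL : 0 < L := hm.trans hmL
  have hsm : 0 < Real.sqrt m := Real.sqrt_pos.mpr hm
  have hsL : 0 < Real.sqrt L := Real.sqrt_pos.mpr hL
  have hsmL : Real.sqrt m < Real.sqrt L := Real.sqrt_lt_sqrt hm.le hmL
  set q : ℝ := (Real.sqrt L - Real.sqrt m) / (Real.sqrt L + Real.sqrt m) with hqdef
  have hq0 : 0 < q := by apply div_pos <;> linarith
  have hqeq : 1 - 2 * Real.sqrt m / (Real.sqrt L + Real.sqrt m) = q := by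
    rw [hqdef]
    field_simp
    ring
  rw [hqeq]
  have hKR : ((K : ℝ)) ≠ 0 := Nat.cast_ne_zero.mpr hK.ne'
  -- angle rewriting for r
  have hrw : ∀ k : Fin K, r k =
      (L + m) / 2 - (L - m) / 2 * Real.cos ((2 * (k : ℕ) + 1) * π / (2 * K)) := by
    intro k
    rw [hr k]
    congr 2
    field_simp
    ring
  have hrpos : ∀ k : Fin K, 0 < r k := by
    intro k
    rw [hrw k]
    have h1 := Real.cos_le_one ((2 * (k : ℕ) + 1) * π / (2 * K))
    nlinarith
  -- per-factor bound
  have hfactor : ∀ j : Fin d, ∀ k : Fin K,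
      |Real.cos (Real.sqrt (2 * lam j) * (π / 2 * (1 / Real.sqrt (2 * r k))))|
        ≤ |1 - lam j / r k| := by
    intro j k
    have hlj := hlam j
    have hlj0 : 0 < lam j := lt_of_lt_of_le hm hlj.1
    have harg : Real.sqrt (2 * lam j) * (π / 2 * (1 / Real.sqrt (2 * r k)))
        = π / 2 * Real.sqrt (lam j / r k) := by
      rw [show lam j / r k = (2 * lam j) / (2 * r k) by
        rw [mul_div_mul_left _ _ (two_ne_zero)]]
      rw [Real.sqrt_div (by positivity) (2 * r k)]
      field_simp
    rw [harg]
    have hx0 : 0 ≤ Real.sqrt (lam j / r k) := Real.sqrt_nonneg _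
    have hsq : Real.sqrt (lam j / r k) ^ 2 = lam j / r k :=
      Real.sq_sqrt (div_nonneg hlj0.le (hrpos k).le)
    have := cosBound (Real.sqrt (lam j / r k)) hx0
    rwa [hsq] at this
  -- the coordinatewise product bound
  have hP : ∀ j : Fin d,
      |∏ k : Fin K, Real.cos (Real.sqrt (2 * lam j) * η k)| ≤ 2 * q ^ K := by
    intro j
    rw [Finset.abs_prod]
    have h1 : ∏ k : Fin K, |Real.cos (Real.sqrt (2 * lam j) * η k)|
        = ∏ k : Fin K, |Real.cos (Real.sqrt (2 * lam j)
            * (π / 2 * (1 / Real.sqrt (2 * r k))))| := by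
      rw [← Equiv.prod_comp σ (fun k => |Real.cos (Real.sqrt (2 * lam j)
            * (π / 2 * (1 / Real.sqrt (2 * r k))))|)]
      exact Finset.prod_congr rfl (fun k _ => by rw [hη k])
    rw [h1]
    have h2 : ∏ k : Fin K, |Real.cos (Real.sqrt (2 * lam j)
          * (π / 2 * (1 / Real.sqrt (2 * r k))))|
        ≤ ∏ k : Fin K, |1 - lam j / r k| := by
      apply Finset.prod_le_prod (fun k _ => abs_nonneg _) (fun k _ => hfactor j k)
    apply h2.trans
    have h3 : ∏ k : Fin K, |1 - lam j / r k|
        = ∏ k ∈ Finset.range K, |1 - lam j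
            / ((L + m) / 2 - (L - m) / 2 * Real.cos ((2 * k + 1) * π / (2 * K)))| := by
      rw [← Fin.prod_univ_eq_prod_range (fun k : ℕ => |1 - lam j
          / ((L + m) / 2 - (L - m) / 2 * Real.cos ((2 * k + 1) * π / (2 * K)))|) K]
      exact Finset.prod_congr rfl (fun k _ => by rw [hrw k])
    rw [h3]
    exact coordBound m L hm hmL K hK (lam j) (hlam j)
  -- iteration
  have hiter : ∀ j : Fin d, x K j - y K j
      = (∏ k : Fin K, Real.cos (Real.sqrt (2 * lam j) * η k)) * (x 0 j - y 0 j) := by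
    intro j
    set C : ℕ → ℝ := fun k =>
      if h : k < K then Real.cos (Real.sqrt (2 * lam j) * η ⟨k, h⟩) else 1 with hC
    have key : ∀ n, n ≤ K → x n j - y n j
        = (∏ k ∈ Finset.range n, C k) * (x 0 j - y 0 j) := by
      intro n
      induction n with
      | zero => intro _; simp
      | succ n ih =>
        intro hn
        have hnK : n < K := hn
        have hs := hstep j ⟨n, hnK⟩
        simp only [Fin.val_mk] at hs
        rw [hs, ih (le_of_lt hnK), Finset.prod_range_succ]
        rw [hC]
        simp only [dif_pos hnK]
        ring
    have hKK := key K le_rfl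
    rw [hKK]
    congr 1
    rw [← Fin.prod_univ_eq_prod_range C K]
    apply Finset.prod_congr rfl
    intro k _
    rw [hC]
    simp only [Fin.is_lt, dif_pos, Fin.eta]
  -- norms
  have hw : ∀ (u : EuclideanSpace ℝ (Fin d)), ‖u‖ = Real.sqrt (∑ i, (u i) ^ 2) := by
    intro u
    rw [EuclideanSpace.norm_eq]
    congr 1
    exact Finset.sum_congr rfl (fun i _ => by rw [Real.norm_eq_abs, sq_abs])
  have hsub : ∀ (n : ℕ) (i : Fin d), (x n - y n) i = x n i - y n i := by
    intro n i
    rfl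
  rw [hw, hw]
  have hsum : ∑ i, ((x K - y K) i) ^ 2
      ≤ (2 * q ^ K) ^ 2 * ∑ i, ((x 0 - y 0) i) ^ 2 := by
    rw [Finset.mul_sum]
    apply Finset.sum_le_sum
    intro i _
    rw [hsub, hsub, hiter i]
    have h2 := hP i
    have h2' : (∏ k : Fin K, Real.cos (Real.sqrt (2 * lam i) * η k)) ^ 2
        ≤ (2 * q ^ K) ^ 2 := by
      rw [← sq_abs]
      apply pow_le_pow_left₀ (abs_nonneg _) h2
    calc ((∏ k : Fin K, Real.cos (Real.sqrt (2 * lam i) * η k)) * (x 0 i - y 0 i)) ^ 2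
        = (∏ k : Fin K, Real.cos (Real.sqrt (2 * lam i) * η k)) ^ 2
          * (x 0 i - y 0 i) ^ 2 := by ring
      _ ≤ (2 * q ^ K) ^ 2 * (x 0 i - y 0 i) ^ 2 := by
          apply mul_le_mul_of_nonneg_right h2' (sq_nonneg _)
  calc Real.sqrt (∑ i, ((x K - y K) i) ^ 2)
      ≤ Real.sqrt ((2 * q ^ K) ^ 2 * ∑ i, ((x 0 - y 0) i) ^ 2) :=
        Real.sqrt_le_sqrt hsum
    _ = 2 * q ^ K * Real.sqrt (∑ i, ((x 0 - y 0) i) ^ 2) := by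
        rw [Real.sqrt_mul (sq_nonneg _), Real.sqrt_sq (by positivity)]
end
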